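/- For a prime p ≥ 3, if v is a word of length greater than p^2, then v^p is not a prefix of the sequence (a_{p;10}(n))_{n≥0}; consequently this sequence is not purely morphic. -/

import Mathlib

/-- Number of occurrences of the word `w` as a factor of the word `x`. -/
def occCount (w x : List ℕ) : ℕ :=
  (List.range (x.length + 1)).countP (fun i => decide (w <+: x.drop i))

/-- Base-`m` expansion of `n`, most significant digit first, with `0` written as the digit `0`. -/
def baseExp (m n : ℕ) : List ℕ :=
  if n = 0 then [0] else (Nat.digits m n).reverse

/-- `e_{m;w}(n)`: number of occurrences of `w` in the base-`m` expansion of `n`. -/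
def eCount (m : ℕ) (w : List ℕ) (n : ℕ) : ℕ := occCount w (baseExp m n)

/-- `a_{m;w}(n) = e_{m;w}(n) mod m`. -/
def aSeq (m : ℕ) (w : List ℕ) (n : ℕ) : ℕ := eCount m w n % m

/-- The value `(w)_m` of the digit string `w` in base `m`. -/
def wordVal (m : ℕ) (w : List ℕ) : ℕ := w.foldl (fun acc d => acc * m + d) 0

/-- The finite word `v` is a prefix of the infinite sequence `s`. -/
def IsPrefixSeq (v : List ℕ) (s : ℕ → ℕ) : Prop := ∀ n < v.length, s n = v.getD n 0

/-- Length of the image under the morphism `φ` of the first `n` letters of `s`. -/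
def morphPrefixLen (φ : ℕ → List ℕ) (s : ℕ → ℕ) (n : ℕ) : ℕ :=
  (Finset.range n).sum fun j => (φ (s j)).length

/-- The infinite sequence `s` is a fixed point of the morphism `φ` (extended by
concatenation to infinite words). -/
def IsMorphFixedPoint (φ : ℕ → List ℕ) (s : ℕ → ℕ) : Prop :=
  ∀ n : ℕ, ∀ i < (φ (s n)).length,
    s (morphPrefixLen φ s n + i) = (φ (s n)).getD i 0

/-- The sequence `s` over the alphabet `{0,...,p-1}` is purely morphic: it is a fixed
point of a non-erasing morphism of `{0,...,p-1}*`, prolongable on the first letter. -/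
def PurelyMorphic (p : ℕ) (s : ℕ → ℕ) : Prop :=
  ∃ φ : ℕ → List ℕ,
    (∀ c < p, φ c ≠ [] ∧ ∀ d ∈ φ c, d < p) ∧
    2 ≤ (φ (s 0)).length ∧
    IsMorphFixedPoint φ s

def occ2 : List ℕ → ℕ
  | a :: b :: t => (if a = 1 ∧ b = 0 then 1 else 0) + occ2 (b :: t)
  | _ => 0

lemma occCount_cons (w : List ℕ) (a : ℕ) (l : List ℕ) :
    occCount w (a :: l) = (if w <+: (a :: l) then 1 else 0) + occCount w l := by
  unfold occCount
  rw [List.length_cons, List.range_succ_eq_map, List.countP_cons, List.countP_map]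
  simp only [Function.comp_def, List.drop_succ_cons, List.drop_zero]
  by_cases h : w <+: (a :: l) <;> simp [h, Nat.add_comm]

lemma occCount_eq_occ2 : ∀ l : List ℕ, occCount [1, 0] l = occ2 l := by
  intro l
  induction l with
  | nil => decide
  | cons a l ih =>
    rw [occCount_cons, ih]
    cases l with
    | nil =>
      have h : ¬ ([1,0] <+: [a]) := fun h => absurd h.length_le (by simp)
      simp [occ2, h]
    | cons b t =>
      have : ([1, 0] <+: (a :: b :: t)) ↔ (a = 1 ∧ b = 0) := by
        constructor
        · intro h
          obtain ⟨u, hu⟩ := h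
          simp at hu
          exact ⟨hu.1.symm, hu.2.1.symm⟩
        · rintro ⟨rfl, rfl⟩
          exact ⟨t, rfl⟩
      rw [occ2]
      by_cases h : a = 1 ∧ b = 0 <;> simp [h, this, Nat.add_comm]

lemma occ2_snoc : ∀ (l : List ℕ) (d : ℕ),
    occ2 (l ++ [d]) = occ2 l + (if l.getLast? = some 1 ∧ d = 0 then 1 else 0) := by
  intro l
  induction l with
  | nil => intro d; simp [occ2]
  | cons a l ih =>
    intro d
    cases l with
    | nil =>
      simp only [List.nil_append, List.cons_append, occ2]
      by_cases h : a = 1 ∧ d = 0 <;> simp [occ2, h]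
    | cons b t =>
      have step : occ2 ((a :: b :: t) ++ [d])
          = (if a = 1 ∧ b = 0 then 1 else 0) + occ2 ((b :: t) ++ [d]) := rfl
      rw [step, ih d]
      have h2 : occ2 (a :: b :: t) = (if a = 1 ∧ b = 0 then 1 else 0) + occ2 (b :: t) := rfl
      rw [List.getLast?_cons_cons, h2]
      have : (b :: t ++ [d]) = ((b :: t) ++ [d]) := rfl
      ring_nf

lemma eCount_small {p n : ℕ} (hp : 2 ≤ p) (hn : n < p) : eCount p [1, 0] n = 0 := by
  unfold eCount baseExp
  by_cases h : n = 0
  · subst h; simp; decide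
  · rw [if_neg h]
    rw [Nat.digits_def' (by omega : 1 < p) (by omega : 0 < n)]
    rw [Nat.mod_eq_of_lt hn, Nat.div_eq_of_lt hn]
    simp [occCount_eq_occ2, occ2]

lemma eCount_rec {p m d : ℕ} (hp : 2 ≤ p) (hm : 1 ≤ m) (hd : d < p) :
    eCount p [1, 0] (p * m + d) = eCount p [1, 0] m +
      (if m % p = 1 ∧ d = 0 then 1 else 0) := by
  have hn : p * m + d ≠ 0 := by positivity
  unfold eCount baseExp
  rw [if_neg hn, if_neg (by omega : m ≠ 0)]
  rw [Nat.digits_def' (by omega : 1 < p) (by omega : 0 < p * m + d)]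
  have h1 : (p * m + d) % p = d := by
    rw [Nat.add_comm, Nat.add_mul_mod_self_left, Nat.mod_eq_of_lt hd]
  have h2 : (p * m + d) / p = m := by
    rw [Nat.add_comm, Nat.add_mul_div_left _ _ (by omega : 0 < p), Nat.div_eq_of_lt hd]
    omega
  rw [h1, h2, List.reverse_cons, occCount_eq_occ2, occCount_eq_occ2, occ2_snoc]
  congr 1
  have h3 : (Nat.digits p m).reverse.getLast? = (Nat.digits p m).head? := by
    simp [List.getLast?_reverse]
  rw [h3, Nat.digits_def' (by omega : 1 < p) (by omega : 0 < m)]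
  simp

lemma eCount_split {p : ℕ} (hp : 2 ≤ p) :
    ∀ k, 1 ≤ k → ∀ m, 1 ≤ m → ∀ t, t < p ^ k →
    eCount p [1, 0] (m * p ^ k + t) = eCount p [1, 0] m + eCount p [1, 0] t +
      (if m % p = 1 ∧ t < p ^ (k - 1) then 1 else 0) := by
  intro k hk
  induction k, hk using Nat.le_induction with
  | base =>
    intro m hm t ht
    rw [pow_one] at ht
    have : m * p ^ 1 + t = p * m + t := by ring
    rw [this, eCount_rec hp hm ht, eCount_small hp ht]
    have h0 : t < p ^ (1 - 1) ↔ t = 0 := by simp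
    by_cases hc : m % p = 1 ∧ t = 0 <;> simp [hc, h0] <;> omega
  | succ k hk ih =>
    intro m hm t ht
    have hppos : 0 < p := by omega
    set t₁ := t / p with ht₁
    set d := t % p with hd
    have hdp : d < p := Nat.mod_lt _ hppos
    have ht1k : t₁ < p ^ k := by
      rw [ht₁, Nat.div_lt_iff_lt_mul hppos]
      calc t < p ^ (k + 1) := ht
        _ = p ^ k * p := pow_succ p k
    have hM : 1 ≤ m * p ^ k + t₁ := by
      have : 1 ≤ p ^ k := Nat.one_le_pow _ _ hppos
      nlinarith
    have hsplit : m * p ^ (k + 1) + t = p * (m * p ^ k + t₁) + d := by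
      have h1 : p * t₁ + d = t := by rw [ht₁, hd]; exact Nat.div_add_mod t p
      rw [← h1]; ring
    rw [hsplit, eCount_rec hp hM hdp, ih m hm t₁ ht1k]
    have hdvd : p ∣ m * p ^ k := Dvd.dvd.mul_left (dvd_pow_self p (by omega : k ≠ 0)) m
    have hMp : (m * p ^ k + t₁) % p = t₁ % p := by
      rcases hdvd with ⟨c, hc⟩
      rw [hc, Nat.mul_comm p c, Nat.add_comm]
      simp
    have hEt : eCount p [1, 0] t = eCount p [1, 0] t₁ + (if t₁ % p = 1 ∧ d = 0 then 1 else 0) := by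
      by_cases h0 : t₁ = 0
      · have hteq : p * t₁ + d = t := by rw [ht₁, hd]; exact Nat.div_add_mod t p
        rw [h0, Nat.mul_zero, Nat.zero_add] at hteq
        have htp : t < p := hteq ▸ hdp
        have hne : (0 : ℕ) % p ≠ 1 := by rw [Nat.zero_mod]; exact one_ne_zero ∘ Eq.symm
        rw [eCount_small hp htp, h0, eCount_small hp (by omega : (0:ℕ) < p)]
        simp [hne]
      · have hteq : t = p * t₁ + d := (Nat.div_add_mod t p).symm
        rw [hteq, eCount_rec hp (Nat.one_le_iff_ne_zero.mpr h0) hdp]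
    have hiff : (t₁ < p ^ (k - 1)) ↔ (t < p ^ k) := by
      rw [ht₁, Nat.div_lt_iff_lt_mul hppos]
      have : p ^ (k - 1) * p = p ^ k := by
        rw [← pow_succ]
        congr 1
        omega
      rw [this]
    have hind : ((m % p = 1 ∧ t₁ < p ^ (k - 1)) : Prop) ↔ (m % p = 1 ∧ t < p ^ (k + 1 - 1)) := by
      simp only [Nat.add_sub_cancel]
      exact and_congr_right (fun _ => hiff)
    rw [hMp, hEt, if_congr hind rfl rfl]
    ring

lemma eCount_pow {p : ℕ} (hp : 2 ≤ p) {k : ℕ} (hk : 1 ≤ k) :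
    eCount p [1, 0] (p ^ k) = 1 := by
  have h := eCount_split hp k hk 1 le_rfl 0 (pow_pos (by omega) k)
  rw [Nat.one_mul, Nat.add_zero] at h
  rw [h, eCount_small hp (by omega : 1 < p), eCount_small hp (by omega : 0 < p)]
  rw [if_pos ⟨Nat.mod_eq_of_lt (by omega), pow_pos (by omega) _⟩]

lemma flatten_replicate_length (v : List ℕ) : ∀ q : ℕ,
    ((List.replicate q v).flatten).length = q * v.length := by
  intro q
  induction q with
  | zero => simp
  | succ q ih => rw [List.replicate_succ, List.flatten_cons, List.length_append, ih]; ring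

lemma flatten_replicate_getD (v : List ℕ) (hv : 0 < v.length) : ∀ (q n : ℕ),
    n < q * v.length → ((List.replicate q v).flatten).getD n 0 = v.getD (n % v.length) 0 := by
  intro q
  induction q with
  | zero => intro n hn; omega
  | succ q ih =>
    intro n hn
    rw [List.replicate_succ, List.flatten_cons]
    by_cases h : n < v.length
    · rw [List.getD_append _ _ _ _ h, Nat.mod_eq_of_lt h]
    · push_neg at h
      have hsm : (q + 1) * v.length = q * v.length + v.length := by ring
      rw [List.getD_append_right _ _ _ _ (by omega)]
      rw [ih (n - v.length) (by omega)]
      congr 1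
      conv_rhs => rw [Nat.mod_eq_sub_mod (by omega)]

lemma part1 {p : ℕ} (hp3 : 3 ≤ p) (v : List ℕ) (hv : p ^ 2 < v.length) :
    ¬ IsPrefixSeq ((List.replicate p v).flatten) (aSeq p [1, 0]) := by
  intro h
  have hp2 : 2 ≤ p := by omega
  set L := v.length with hLdef
  have hL0 : 0 < L := by
    have : 0 < p ^ 2 := pow_pos (by omega) 2
    omega
  have hlen := flatten_replicate_length v p
  have hs : ∀ n, n < p * L → aSeq p [1, 0] n = v.getD (n % L) 0 := by
    intro n hn
    rw [h n (by rw [hlen]; exact hn), flatten_replicate_getD v hL0 p n hn]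
  have hper : ∀ n, n + L < p * L → aSeq p [1, 0] n = aSeq p [1, 0] (n + L) := by
    intro n hn
    rw [hs n (by omega), hs (n + L) hn, Nat.add_mod_right]
  set k := Nat.log p L with hkdef
  have hk2 : 2 ≤ k := (Nat.le_log_iff_pow_le (by omega) (by omega)).mpr hv.le
  have hKL : p ^ k ≤ L := Nat.pow_log_le_self p (by omega)
  have hLP : L < p ^ (k + 1) := Nat.lt_pow_succ_log_self (by omega) L
  have hK0 : 0 < p ^ k := pow_pos (by omega) k
  set b := L / p ^ k with hbdef
  set r := L % p ^ k with hrdef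
  have hbr : p ^ k * b + r = L := Nat.div_add_mod L (p ^ k)
  have hr : r < p ^ k := Nat.mod_lt _ hK0
  have hb1 : 1 ≤ b := (Nat.one_le_div_iff hK0).mpr hKL
  have hbp : b < p := by
    rw [hbdef, Nat.div_lt_iff_lt_mul hK0]
    calc L < p ^ (k + 1) := hLP
      _ = p ^ k * p := pow_succ p k
      _ = p * p ^ k := Nat.mul_comm _ _
  have hKP : p ^ k * p = p ^ (k + 1) := (pow_succ p k).symm
  have hK1K : p ^ (k - 1) * p = p ^ k := by
    rw [← pow_succ]; congr 1; omega
  have hK1pos : 0 < p ^ (k - 1) := pow_pos (by omega) _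
  have hK1lt : p ^ (k - 1) < p ^ k := by nlinarith
  clear_value k b r
  clear hbdef hrdef hkdef
  have h1p : 1 % p = 1 := Nat.mod_eq_of_lt (by omega)
  have hE0 : eCount p [1, 0] 0 = 0 := eCount_small hp2 (by omega)
  have hEK : eCount p [1, 0] (p ^ k) = 1 := eCount_pow hp2 (by omega)
  have hEK1 : eCount p [1, 0] (p ^ (k - 1)) = 1 := eCount_pow hp2 (by omega)
  have hEP : eCount p [1, 0] (p ^ (k + 1)) = 1 := eCount_pow hp2 (by omega)
  have hbound : ∀ x, x < 2 * p ^ k → x + L < p * L := by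
    intro x hx
    have h3 : 3 * L ≤ p * L := Nat.mul_le_mul_right L hp3
    omega
  -- value of a at p^k
  have haK : aSeq p [1, 0] (p ^ k) = 1 := by
    simp only [aSeq]; rw [hEK, h1p]
  by_cases hb : b + 1 < p
  · -- case b ≤ p - 2
    have e1 := hper (p ^ k) (hbound _ (by omega))
    have hsA : p ^ k + L = (b + 1) * p ^ k + r := by
      rw [← hbr]; ring
    have hEA : eCount p [1, 0] ((b + 1) * p ^ k + r)
        = eCount p [1, 0] r := by
      rw [eCount_split hp2 k (by omega) (b + 1) (by omega) r hr]
      rw [eCount_small hp2 hb]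
      rw [if_neg (by rw [Nat.mod_eq_of_lt hb]; omega)]
      omega
    rw [haK, hsA] at e1
    simp only [aSeq] at e1
    rw [hEA] at e1
    -- e1 : 1 = eCount r % p
    have e0 := hper 0 (hbound _ (by omega))
    rw [Nat.zero_add] at e0
    simp only [aSeq] at e0
    rw [hE0, Nat.zero_mod] at e0
    have hEL : eCount p [1, 0] L = eCount p [1, 0] r
        + (if b % p = 1 ∧ r < p ^ (k - 1) then 1 else 0) := by
      conv_lhs => rw [← hbr]
      rw [Nat.mul_comm, eCount_split hp2 k (by omega) b (by omega) r hr]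
      rw [eCount_small hp2 hbp]
      omega
    rw [hEL] at e0
    by_cases hc : b % p = 1 ∧ r < p ^ (k - 1)
    · rw [if_pos hc, Nat.add_mod, ← e1, h1p] at e0
      have : (1 + 1) % p = 2 := by
        rw [Nat.mod_eq_of_lt (by omega)]
      omega
    · rw [if_neg hc, Nat.add_zero, ← e1] at e0
      omega
  · -- case b = p - 1
    have hbeq : b + 1 = p := by omega
    have hb2 : 2 ≤ b := by omega
    -- e1 : at p^k, getting eCount r % p = 0
    have e1 := hper (p ^ k) (hbound _ (by omega))
    have hsB : p ^ k + L = 1 * p ^ (k + 1) + r := by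
      rw [← hbr, Nat.one_mul, ← hKP, ← hbeq]; ring
    have hEB : eCount p [1, 0] (1 * p ^ (k + 1) + r) = eCount p [1, 0] r + 1 := by
      rw [eCount_split hp2 (k + 1) (by omega) 1 le_rfl r (by omega)]
      rw [eCount_small hp2 (by omega : 1 < p)]
      rw [if_pos ⟨h1p, by simpa using hr⟩]
      omega
    rw [haK, hsB] at e1
    simp only [aSeq] at e1
    rw [hEB] at e1
    -- derive eCount r % p = 0
    have hEr0 : eCount p [1, 0] r % p = 0 := by
      rw [Nat.add_mod] at e1
      have hlt : eCount p [1, 0] r % p < p := Nat.mod_lt _ (by omega)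
      rcases Nat.lt_or_ge (eCount p [1, 0] r % p + 1 % p) p with hc | hc
      · rw [Nat.mod_eq_of_lt hc] at e1; omega
      · have : eCount p [1, 0] r % p + 1 % p = p := by omega
        rw [this, Nat.mod_self] at e1; omega
    -- e6 : at p^(k+1)
    have hbig : p ^ (k + 1) + L < p * L := by
      have hLb : p ^ k * b ≤ L := le_trans (Nat.le_add_right _ r) (le_of_eq hbr)
      have h1 : p ^ (k + 1) < b * L := by
        calc p ^ (k + 1) = p ^ k * (b + 1) := by rw [← hKP, hbeq]
          _ < p ^ k * (b * b) := by
              have hlt : b + 1 < b * b := by nlinarith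
              exact mul_lt_mul_of_pos_left hlt hK0
          _ = b * (p ^ k * b) := by ring
          _ ≤ b * L := Nat.mul_le_mul_left b hLb
      have h2 : p * L = b * L + L := by rw [← hbeq]; ring
      omega
    have e6 := hper (p ^ (k + 1)) hbig
    have hsC : p ^ (k + 1) + L = (p + b) * p ^ k + r := by
      rw [← hbr, ← hKP]; ring
    have hEC : eCount p [1, 0] ((p + b) * p ^ k + r) = eCount p [1, 0] r := by
      rw [eCount_split hp2 k (by omega) (p + b) (by omega) r hr]
      have hm1 : (p + b) % p = b := by
        rw [Nat.add_mod_left, Nat.mod_eq_of_lt hbp]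
      have hEpb : eCount p [1, 0] (p + b) = 0 := by
        have hpb : p + b = p * 1 + b := by ring
        rw [hpb, eCount_rec hp2 le_rfl hbp, eCount_small hp2 (by omega),
          if_neg (by omega)]
      rw [if_neg (by rw [hm1]; omega), hEpb]
      omega
    rw [hsC] at e6
    simp only [aSeq] at e6
    rw [hEC, hEP, h1p, hEr0] at e6
    exact absurd e6 one_ne_zero

lemma len_Wn (φ : ℕ → List ℕ) (s : ℕ → ℕ) (n : ℕ) :
    ((List.range n).flatMap (fun j => φ (s j))).length = morphPrefixLen φ s n := by
  induction n with
  | zero => simp [morphPrefixLen]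
  | succ n ih =>
    rw [List.range_succ, List.flatMap_append, List.length_append, ih]
    show morphPrefixLen φ s n + ([n].flatMap fun j => φ (s j)).length = morphPrefixLen φ s (n + 1)
    rw [morphPrefixLen, morphPrefixLen, Finset.sum_range_succ]
    simp

lemma prefix_Wn (φ : ℕ → List ℕ) (s : ℕ → ℕ) (hfix : IsMorphFixedPoint φ s) (n : ℕ) :
    IsPrefixSeq ((List.range n).flatMap (fun j => φ (s j))) s := by
  induction n with
  | zero => intro i hi; simp at hi
  | succ n ih =>
    intro i hi
    have hsing : ([n].flatMap fun j => φ (s j)) = φ (s n) := by simp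
    rw [List.range_succ, List.flatMap_append, hsing] at hi ⊢
    rw [List.length_append] at hi
    by_cases hcase : i < ((List.range n).flatMap (fun j => φ (s j))).length
    · rw [List.getD_append _ _ _ _ hcase]; exact ih i hcase
    · push_neg at hcase
      rw [List.getD_append_right _ _ _ _ hcase]
      rw [len_Wn] at hcase hi ⊢
      have hfi := hfix n (i - morphPrefixLen φ s n) (by omega)
      rw [← hfi]
      congr 1
      omega

lemma flatMap_prefix (φ : ℕ → List ℕ) (s : ℕ → ℕ) (hfix : IsMorphFixedPoint φ s)
    (u : List ℕ) (hu : IsPrefixSeq u s) : IsPrefixSeq (u.flatMap φ) s := by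
  have hu_eq : u = (List.range u.length).map s := by
    apply List.ext_getElem (by simp)
    intro i h1 h2
    rw [List.getElem_map, List.getElem_range]
    rw [hu i h1, List.getD_eq_getElem _ _ h1]
  have : u.flatMap φ = (List.range u.length).flatMap (fun j => φ (s j)) := by
    conv_lhs => rw [hu_eq]
    rw [List.flatMap_map]
  rw [this]
  exact prefix_Wn φ s hfix u.length

lemma flatMap_flatten_replicate (φ : ℕ → List ℕ) (w : List ℕ) : ∀ q : ℕ,
    ((List.replicate q w).flatten).flatMap φ = (List.replicate q (w.flatMap φ)).flatten := by
  intro q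
  induction q with
  | zero => simp
  | succ q ih =>
    rw [List.replicate_succ, List.replicate_succ, List.flatten_cons, List.flatten_cons,
      List.flatMap_append, ih]

lemma flatten_replicate_singleton (a : ℕ) : ∀ q : ℕ,
    (List.replicate q [a]).flatten = List.replicate q a := by
  intro q
  induction q with
  | zero => simp
  | succ q ih => rw [List.replicate_succ, List.flatten_cons, ih, List.replicate_succ]; rfl

lemma flatMap_len_ge (φ : ℕ → List ℕ) : ∀ w : List ℕ, (∀ c ∈ w, φ c ≠ []) →
    w.length ≤ (w.flatMap φ).length := by
  intro w
  induction w with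
  | nil => simp
  | cons a w ih =>
    intro hw
    rw [List.flatMap_cons, List.length_append, List.length_cons]
    have h1 : 1 ≤ (φ a).length := by
      have := hw a List.mem_cons_self
      cases hφa : φ a with
      | nil => exact absurd hφa this
      | cons x xs => simp
    have h2 := ih (fun c hc => hw c (List.mem_cons_of_mem _ hc))
    omega

def iterImg (φ : ℕ → List ℕ) : ℕ → List ℕ := fun j => (fun w => w.flatMap φ)^[j] [0]

lemma part2 {p : ℕ} (hp3 : 3 ≤ p) : ¬ PurelyMorphic p (aSeq p [1, 0]) := by
  rintro ⟨φ, hφ, hlen2, hfix⟩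
  set s := aSeq p [1, 0] with hsdef
  have hp2 : 2 ≤ p := by omega
  have hs_lt : ∀ n, s n < p := fun n => Nat.mod_lt _ (by omega)
  have hs_small : ∀ n, n < p → s n = 0 := by
    intro n hn
    rw [hsdef]
    show eCount p [1, 0] n % p = 0
    rw [eCount_small hp2 hn, Nat.zero_mod]
  have hs0 : s 0 = 0 := hs_small 0 (by omega)
  have hφ0 : 2 ≤ (φ 0).length := by rw [hs0] at hlen2; exact hlen2
  -- p-th powers of iterImg are prefixes
  have hpre : ∀ j, IsPrefixSeq ((List.replicate p (iterImg φ j)).flatten) s := by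
    intro j
    induction j with
    | zero =>
      intro n hn
      have hfl : (List.replicate p ([0] : List ℕ)).flatten = List.replicate p (0 : ℕ) :=
        flatten_replicate_singleton 0 p
      show s n = ((List.replicate p (iterImg φ 0)).flatten).getD n 0
      have h0 : iterImg φ 0 = [0] := rfl
      rw [h0] at hn ⊢
      rw [hfl] at hn ⊢
      rw [List.length_replicate] at hn
      rw [List.getD_eq_getElem _ _ (by simpa using hn), List.getElem_replicate]
      exact hs_small n hn
    | succ j ih =>
      have hstep : iterImg φ (j + 1) = (iterImg φ j).flatMap φ :=
        Function.iterate_succ_apply' _ j [0]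
      rw [hstep, ← flatMap_flatten_replicate]
      exact flatMap_prefix φ s hfix _ ih
  -- each iterImg is itself a prefix
  have hvpre : ∀ j, IsPrefixSeq (iterImg φ j) s := by
    intro j n hn
    obtain ⟨q, hq⟩ : ∃ q, p = q + 1 := ⟨p - 1, by omega⟩
    have hre : (List.replicate p (iterImg φ j)).flatten
        = iterImg φ j ++ (List.replicate q (iterImg φ j)).flatten := by
      rw [hq, List.replicate_succ, List.flatten_cons]
    rw [hpre j n (by rw [hre, List.length_append]; omega), hre,
      List.getD_append _ _ _ _ hn]
  -- growth
  have hgrow : ∀ j, j + 1 ≤ (iterImg φ j).length := by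
    intro j
    induction j with
    | zero => simp [iterImg]
    | succ j ih =>
      have hne : iterImg φ j ≠ [] := by
        intro hcon; rw [hcon] at ih; simp at ih
      obtain ⟨hd, tl, hvj⟩ := List.exists_cons_of_ne_nil hne
      have hhd : hd = 0 := by
        have h1 := hvpre j 0 (by rw [hvj]; simp)
        rw [hvj, hs0] at h1
        exact h1.symm
      have hstep0 : iterImg φ (j + 1) = (iterImg φ j).flatMap φ :=
        Function.iterate_succ_apply' _ j [0]
      have hstep : iterImg φ (j + 1) = φ hd ++ tl.flatMap φ := by
        rw [hstep0, hvj, List.flatMap_cons]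
      have hmem : ∀ c ∈ tl, φ c ≠ [] := by
        intro c hc
        have hcv : c ∈ iterImg φ j := by rw [hvj]; exact List.mem_cons_of_mem _ hc
        obtain ⟨i, hi, hci⟩ := List.mem_iff_getElem.mp hcv
        have hcs : c = s i := by
          rw [← hci, hvpre j i hi, List.getD_eq_getElem _ _ hi]
        rw [hcs]
        exact (hφ (s i) (hs_lt i)).1
      have htl := flatMap_len_ge φ tl hmem
      have hlen : tl.length + 1 = (iterImg φ j).length := by rw [hvj]; simp
      rw [hstep, List.length_append, hhd]
      omega
  have hbig : p ^ 2 < (iterImg φ (p ^ 2)).length := by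
    have := hgrow (p ^ 2); omega
  exact part1 hp3 (iterImg φ (p ^ 2)) hbig (hpre (p ^ 2))

theorem stmt18 (p : ℕ) (hp : p.Prime) (hp3 : 3 ≤ p) :
    (∀ v : List ℕ, p ^ 2 < v.length →
      ¬ IsPrefixSeq ((List.replicate p v).flatten) (aSeq p [1, 0])) ∧
    ¬ PurelyMorphic p (aSeq p [1, 0]) := by
  exact ⟨fun v hv => part1 hp3 v hv, part2 hp3⟩
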